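/- Let (u_j)_{j=1}^l be a classical solution of the regularized thin-film system on the graph on [0,T], and let A > 0 and G_ε(z) := ∫_A^z ∫_A^v dy dv / (|y|^n + ε). Then the entropy identity holds: for every t ∈ [0,T], ∑_{j=1}^l ∫₀¹ G_ε(u_j(s,t)) ds + ∑_{j=1}^l ∫₀ᵗ ∫₀¹ w_j(s,σ)² ds dσ = ∑_{j=1}^l ∫₀¹ G_ε(u_j(s,0)) ds. In particular the entropy ∑_j ∫₀¹ G_ε(u_j(s,t)) ds is nonincreasing in t. -/

import Mathlib

open Set MeasureTheory intervalIntegral Real Filter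
open Topology

/-- The regularized mobility `f_ε(z) = |z|^n + ε`. -/
noncomputable def tfeF (n ε z : ℝ) : ℝ := |z| ^ n + ε

/-- `w = -∂_s² u` for a function `u = u(s,t)` of two variables. -/
noncomputable def tfeW (u : ℝ → ℝ → ℝ) (s t : ℝ) : ℝ :=
  -(iteratedDeriv 2 (fun x => u x t) s)

/-- A classical solution of the regularized thin-film system on a metric graph with
edges `j : Fin l` (parameterized over `[0,1]`, with tail vertex `tl j` at `s = 0` and
head vertex `hd j` at `s = 1`), boundary vertex set `bdry`, on the time interval `[0,T]`. -/
structure IsGraphTFESolution {l m : ℕ} (n ε T : ℝ) (tl hd : Fin l → Fin m)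
    (bdry : Set (Fin m)) (u : Fin l → ℝ → ℝ → ℝ) : Prop where
  /-- regularity (in particular `C^{4,1}`) -/
  smooth : ∀ j, ContDiff ℝ 4 (fun p : ℝ × ℝ => u j p.1 p.2)
  /-- the PDE `∂_t u_j = ∂_s (f_ε(u_j) ∂_s w_j)` -/
  pde : ∀ j, ∀ s ∈ Icc (0:ℝ) 1, ∀ t ∈ Icc (0:ℝ) T,
    deriv (fun τ => u j s τ) t
      = deriv (fun x => tfeF n ε (u j x t) * deriv (fun y => tfeW (u j) y t) x) s
  /-- continuity of `u` at interior vertices -/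
  cont_u_hh : ∀ a ∉ bdry, ∀ t ∈ Icc (0:ℝ) T, ∀ j j', hd j = a → hd j' = a →
    u j 1 t = u j' 1 t
  cont_u_tt : ∀ a ∉ bdry, ∀ t ∈ Icc (0:ℝ) T, ∀ i i', tl i = a → tl i' = a →
    u i 0 t = u i' 0 t
  cont_u_ht : ∀ a ∉ bdry, ∀ t ∈ Icc (0:ℝ) T, ∀ j i, hd j = a → tl i = a →
    u j 1 t = u i 0 t
  /-- continuity of `w` at interior vertices -/
  cont_w_hh : ∀ a ∉ bdry, ∀ t ∈ Icc (0:ℝ) T, ∀ j j', hd j = a → hd j' = a →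
    tfeW (u j) 1 t = tfeW (u j') 1 t
  cont_w_tt : ∀ a ∉ bdry, ∀ t ∈ Icc (0:ℝ) T, ∀ i i', tl i = a → tl i' = a →
    tfeW (u i) 0 t = tfeW (u i') 0 t
  cont_w_ht : ∀ a ∉ bdry, ∀ t ∈ Icc (0:ℝ) T, ∀ j i, hd j = a → tl i = a →
    tfeW (u j) 1 t = tfeW (u i) 0 t
  /-- Kirchhoff balance of `∂_s u` at interior vertices -/
  kirchhoff_u : ∀ a ∉ bdry, ∀ t ∈ Icc (0:ℝ) T,
    ∑ j ∈ Finset.univ.filter (fun j => hd j = a), deriv (fun x => u j x t) 1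
      = ∑ i ∈ Finset.univ.filter (fun i => tl i = a), deriv (fun x => u i x t) 0
  /-- Kirchhoff balance of `∂_s w` at interior vertices -/
  kirchhoff_w : ∀ a ∉ bdry, ∀ t ∈ Icc (0:ℝ) T,
    ∑ j ∈ Finset.univ.filter (fun j => hd j = a), deriv (fun x => tfeW (u j) x t) 1
      = ∑ i ∈ Finset.univ.filter (fun i => tl i = a), deriv (fun x => tfeW (u i) x t) 0
  /-- no-flux conditions at boundary vertices (head side) -/
  bdry_head : ∀ a ∈ bdry, ∀ t ∈ Icc (0:ℝ) T, ∀ j, hd j = a →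
    deriv (fun x => u j x t) 1 = 0 ∧ deriv (fun x => tfeW (u j) x t) 1 = 0
  /-- no-flux conditions at boundary vertices (tail side) -/
  bdry_tail : ∀ a ∈ bdry, ∀ t ∈ Icc (0:ℝ) T, ∀ i, tl i = a →
    deriv (fun x => u i x t) 0 = 0 ∧ deriv (fun x => tfeW (u i) x t) 0 = 0

/-- The entropy function `G_ε(z) = ∫_A^z ∫_A^v dy dv / (|y|^n + ε)`. -/
noncomputable def tfeG (n ε A z : ℝ) : ℝ := ∫ v in A..z, ∫ y in A..v, (|y| ^ n + ε)⁻¹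

section basic
variable {n ε : ℝ}

lemma continuous_absRpow (hn : 1 ≤ n) : Continuous fun z : ℝ => |z| ^ n :=
  (Real.continuous_rpow_const (by linarith)).comp continuous_abs

lemma continuous_tfeF (hn : 1 ≤ n) : Continuous (tfeF n ε) :=
  (continuous_absRpow hn).add continuous_const

lemma tfeF_pos (hn : 1 ≤ n) (hε : 0 < ε) (z : ℝ) : 0 < tfeF n ε z :=
  add_pos_of_nonneg_of_pos (Real.rpow_nonneg (abs_nonneg z) n) hε

/-- the inner integrand `1/f` -/
lemma continuous_invF (hn : 1 ≤ n) (hε : 0 < ε) :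
    Continuous fun y : ℝ => (|y| ^ n + ε)⁻¹ :=
  (continuous_tfeF hn).inv₀ fun z => (tfeF_pos hn hε z).ne'

/-- `g(v) = ∫_A^v 1/f`. -/
noncomputable def tfeg (n ε A v : ℝ) : ℝ := ∫ y in A..v, (|y| ^ n + ε)⁻¹

lemma hasDerivAt_tfeg (hn : 1 ≤ n) (hε : 0 < ε) (A v : ℝ) :
    HasDerivAt (tfeg n ε A) ((tfeF n ε v)⁻¹) v := by
  have hc := continuous_invF (ε := ε) hn hε
  exact intervalIntegral.integral_hasDerivAt_right (hc.intervalIntegrable _ _)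
    (hc.stronglyMeasurable.stronglyMeasurableAtFilter) hc.continuousAt

lemma continuous_tfeg (hn : 1 ≤ n) (hε : 0 < ε) (A : ℝ) : Continuous (tfeg n ε A) :=
  Differentiable.continuous (fun v => (hasDerivAt_tfeg hn hε A v).differentiableAt)

lemma hasDerivAt_tfeG (hn : 1 ≤ n) (hε : 0 < ε) (A z : ℝ) :
    HasDerivAt (tfeG n ε A) (tfeg n ε A z) z := by
  have hc := continuous_tfeg (ε := ε) hn hε A
  exact intervalIntegral.integral_hasDerivAt_right (hc.intervalIntegrable _ _)
    (hc.stronglyMeasurable.stronglyMeasurableAtFilter) hc.continuousAt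

lemma continuous_tfeG (hn : 1 ≤ n) (hε : 0 < ε) (A : ℝ) : Continuous (tfeG n ε A) :=
  Differentiable.continuous (fun v => (hasDerivAt_tfeG hn hε A v).differentiableAt)

end basic

noncomputable def pd1 (F : ℝ × ℝ → ℝ) : ℝ × ℝ → ℝ := fun p => fderiv ℝ F p (1, 0)
noncomputable def pd2 (F : ℝ × ℝ → ℝ) : ℝ × ℝ → ℝ := fun p => fderiv ℝ F p (0, 1)

lemma hasDerivAt_slice1 {F : ℝ × ℝ → ℝ} (hF : Differentiable ℝ F) (s t : ℝ) :
    HasDerivAt (fun x => F (x, t)) (pd1 F (s, t)) s := by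
  have h1 : HasDerivAt (fun x : ℝ => (x, t)) ((1 : ℝ), (0 : ℝ)) s :=
    (hasDerivAt_id s).prodMk (hasDerivAt_const s t)
  exact (hF (s, t)).hasFDerivAt.comp_hasDerivAt s h1

lemma hasDerivAt_slice2 {F : ℝ × ℝ → ℝ} (hF : Differentiable ℝ F) (s t : ℝ) :
    HasDerivAt (fun τ => F (s, τ)) (pd2 F (s, t)) t := by
  have h1 : HasDerivAt (fun τ : ℝ => (s, τ)) ((0 : ℝ), (1 : ℝ)) t :=
    (hasDerivAt_const t s).prodMk (hasDerivAt_id t)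
  exact (hF (s, t)).hasFDerivAt.comp_hasDerivAt t h1

lemma deriv_slice1 {F : ℝ × ℝ → ℝ} (hF : Differentiable ℝ F) (s t : ℝ) :
    deriv (fun x => F (x, t)) s = pd1 F (s, t) :=
  (hasDerivAt_slice1 hF s t).deriv

lemma deriv_slice2 {F : ℝ × ℝ → ℝ} (hF : Differentiable ℝ F) (s t : ℝ) :
    deriv (fun τ => F (s, τ)) t = pd2 F (s, t) :=
  (hasDerivAt_slice2 hF s t).deriv

lemma contDiff_pd1 {F : ℝ × ℝ → ℝ} {k : ℕ} (hF : ContDiff ℝ (k + 1 : ℕ) F) :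
    ContDiff ℝ (k : ℕ) (pd1 F) :=
  (hF.fderiv_right (by norm_cast)).clm_apply contDiff_const

lemma contDiff_pd2 {F : ℝ × ℝ → ℝ} {k : ℕ} (hF : ContDiff ℝ (k + 1 : ℕ) F) :
    ContDiff ℝ (k : ℕ) (pd2 F) :=
  (hF.fderiv_right (by norm_cast)).clm_apply contDiff_const

lemma tfeW_eq_pd {u : ℝ → ℝ → ℝ} (hu : ContDiff ℝ 4 (fun p : ℝ × ℝ => u p.1 p.2)) (s t : ℝ) :
    tfeW u s t = -(pd1 (pd1 fun p : ℝ × ℝ => u p.1 p.2) (s, t)) := by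
  have h3 : ContDiff ℝ (3 : ℕ) (pd1 fun p : ℝ × ℝ => u p.1 p.2) :=
    contDiff_pd1 (by exact_mod_cast hu)
  have hd : Differentiable ℝ (fun p : ℝ × ℝ => u p.1 p.2) :=
    hu.differentiable (by norm_num)
  have e1 : (fun x => u x t) = fun x => (fun p : ℝ × ℝ => u p.1 p.2) (x, t) := rfl
  rw [tfeW, iteratedDeriv_succ, iteratedDeriv_one, e1]
  have e2 : deriv (fun x => (fun p : ℝ × ℝ => u p.1 p.2) (x, t))
      = fun x => pd1 (fun p : ℝ × ℝ => u p.1 p.2) (x, t) :=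
    funext fun x => deriv_slice1 hd x t
  rw [e2, deriv_slice1 (h3.differentiable (by norm_num)) s t]
section ext

/-- Local version of `hasDerivAt_of_hasDerivAt_of_ne`: if `f` has derivative `g y` at all `y ≠ x`
near `x`, and `f`, `g` are continuous at `x`, then `f` has derivative `g x` at `x`. -/
lemma hasDerivAt_of_eventually_nhdsNE {f g : ℝ → ℝ} {x : ℝ}
    (f_diff : ∀ᶠ y in 𝓝[≠] x, HasDerivAt f (g y) y)
    (hf : ContinuousAt f x) (hg : ContinuousAt g x) : HasDerivAt f (g x) x := by
  have hE : {y | HasDerivAt f (g y) y} ∈ 𝓝[≠] x := f_diff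
  have hgt : 𝓝[>] x ≤ 𝓝[≠] x := nhdsWithin_mono x fun y hy => ne_of_gt hy
  have hlt : 𝓝[<] x ≤ 𝓝[≠] x := nhdsWithin_mono x fun y hy => ne_of_lt hy
  have A : HasDerivWithinAt f (g x) (Ici x) x := by
    set s : Set ℝ := {y | HasDerivAt f (g y) y} ∩ Ioi x with hs_def
    have hs : s ∈ 𝓝[>] x := Filter.inter_mem (hgt hE) self_mem_nhdsWithin
    have diff : DifferentiableOn ℝ f s := fun y hy => hy.1.differentiableAt.differentiableWithinAt
    apply hasDerivWithinAt_Ici_of_tendsto_deriv diff hf.continuousWithinAt hs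
    have htg : Filter.Tendsto g (𝓝[>] x) (𝓝 (g x)) :=
      (hg.continuousWithinAt (s := Ioi x)).tendsto
    apply htg.congr'
    filter_upwards [hs] with y hy
    exact (hy.1.deriv).symm
  have B : HasDerivWithinAt f (g x) (Iic x) x := by
    set s : Set ℝ := {y | HasDerivAt f (g y) y} ∩ Iio x with hs_def
    have hs : s ∈ 𝓝[<] x := Filter.inter_mem (hlt hE) self_mem_nhdsWithin
    have diff : DifferentiableOn ℝ f s := fun y hy => hy.1.differentiableAt.differentiableWithinAt
    apply hasDerivWithinAt_Iic_of_tendsto_deriv diff hf.continuousWithinAt hs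
    have htg : Filter.Tendsto g (𝓝[<] x) (𝓝 (g x)) :=
      (hg.continuousWithinAt (s := Iio x)).tendsto
    apply htg.congr'
    filter_upwards [hs] with y hy
    exact (hy.1.deriv).symm
  simpa using B.union A

/-- At a point where either `h x ≠ 0` or `h` has vanishing derivative,
`y ↦ |h y| ^ n` is differentiable (`1 ≤ n`). -/
lemma differentiableAt_absRpow_comp {n : ℝ} (hn : 1 ≤ n) {h : ℝ → ℝ} {x : ℝ}
    (hd : DifferentiableAt ℝ h x) (hx : h x = 0 → deriv h x = 0) :
    DifferentiableAt ℝ (fun y => |h y| ^ n) x := by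
  have hn0 : n ≠ 0 := by linarith
  by_cases hx0 : h x = 0
  · -- derivative is 0
    have hld : HasDerivAt h 0 x := by
      have := hd.hasDerivAt
      rwa [hx hx0] at this
    have key : HasDerivAt (fun y => |h y| ^ n) 0 x := by
      rw [hasDerivAt_iff_isLittleO] at hld ⊢
      have hzero : |h x| ^ n = 0 := by
        rw [hx0, abs_zero, Real.zero_rpow hn0]
      simp only [hx0, sub_zero, smul_zero, hzero] at hld ⊢
      have h2 : (fun y => |h y| ^ n) =O[𝓝 x] fun y => h y := by
        apply Asymptotics.IsBigO.of_bound 1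
        have htend : Filter.Tendsto (fun y => |h y|) (𝓝 x) (𝓝 0) := by
          have h0 : ContinuousAt (fun y => |h y|) x := hd.continuousAt.abs
          have := h0.tendsto
          rwa [hx0, abs_zero] at this
        have hev : ∀ᶠ y in 𝓝 x, |h y| ≤ 1 :=
          htend.eventually (eventually_le_nhds (by norm_num))
        filter_upwards [hev] with y hy
        have h1 : ‖|h y| ^ n‖ = |h y| ^ n := by
          rw [Real.norm_eq_abs, abs_of_nonneg (Real.rpow_nonneg (abs_nonneg _) n)]
        rw [h1, Real.norm_eq_abs, one_mul]
        rcases eq_or_ne (h y) 0 with h0 | h0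
        · rw [h0, abs_zero, Real.zero_rpow hn0]
        · calc |h y| ^ n ≤ |h y| ^ (1:ℝ) :=
                Real.rpow_le_rpow_of_exponent_ge (abs_pos.2 h0) hy hn
            _ = |h y| := Real.rpow_one _
      have := h2.trans_isLittleO hld
      simpa [Real.zero_rpow hn0] using this
    exact key.differentiableAt
  · have habs : HasDerivAt (fun y => |h y|) ((SignType.sign (h x) : ℝ) * deriv h x) x :=
      (hasDerivAt_abs hx0).comp x hd.hasDerivAt
    exact ((Real.hasDerivAt_rpow_const (p := n) (Or.inr hn)).comp x habs).differentiableAt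

lemma eventually_ne_of_deriv_ne {h : ℝ → ℝ} {x : ℝ} (hd : HasDerivAt h (deriv h x) x)
    (h0 : deriv h x ≠ 0) : ∀ᶠ y in 𝓝[≠] x, h y ≠ h x := by
  apply hd.hasFDerivAt.eventually_ne
  refine ⟨⟨|deriv h x|⁻¹, by positivity⟩, ContinuousLinearMap.antilipschitz_of_bound _ fun z => ?_⟩
  show ‖z‖ ≤ |deriv h x|⁻¹ * _
  have : ‖(ContinuousLinearMap.toSpanSingleton ℝ (deriv h x)) z‖
      = |z| * |deriv h x| := by
    simp [Real.norm_eq_abs, abs_mul, mul_comm]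
  rw [this, Real.norm_eq_abs, inv_mul_eq_div, mul_comm |z| _, mul_div_assoc, mul_comm,
    div_mul_cancel₀ _ (abs_ne_zero.2 h0)]

end ext
section edge

variable {n ε : ℝ}

/-- Per-edge integration by parts identity at a fixed time. -/
lemma edge_integral_identity (hn : 1 ≤ n) (hε : 0 < ε) (A : ℝ)
    {u : ℝ → ℝ → ℝ} (hu : ContDiff ℝ 4 (fun p : ℝ × ℝ => u p.1 p.2)) {t : ℝ}
    (hpde : ∀ s ∈ Icc (0:ℝ) 1,
      deriv (fun τ => u s τ) t
        = deriv (fun x => tfeF n ε (u x t) * deriv (fun y => tfeW u y t) x) s) :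
    ∫ s in (0:ℝ)..1, tfeg n ε A (u s t) * deriv (fun τ => u s τ) t
      = (tfeg n ε A (u 1 t) * (tfeF n ε (u 1 t) * deriv (fun y => tfeW u y t) 1)
          - deriv (fun x => u x t) 1 * tfeW u 1 t)
        - (tfeg n ε A (u 0 t) * (tfeF n ε (u 0 t) * deriv (fun y => tfeW u y t) 0)
          - deriv (fun x => u x t) 0 * tfeW u 0 t)
        - ∫ s in (0:ℝ)..1, (tfeW u s t) ^ 2 := by
  set F2 : ℝ × ℝ → ℝ := fun p : ℝ × ℝ => u p.1 p.2 with hF2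
  have hu4 : ContDiff ℝ ((3 + 1 : ℕ) : WithTop ℕ∞) F2 := by exact_mod_cast hu
  have hP1 : ContDiff ℝ ((2 + 1 : ℕ) : WithTop ℕ∞) (pd1 F2) := by
    exact_mod_cast contDiff_pd1 hu4
  have hP2 : ContDiff ℝ ((1 + 1 : ℕ) : WithTop ℕ∞) (pd1 (pd1 F2)) := by
    exact_mod_cast contDiff_pd1 hP1
  have hP3 : ContDiff ℝ ((1 : ℕ) : WithTop ℕ∞) (pd1 (pd1 (pd1 F2))) := contDiff_pd1 hP2
  have hUt : ContDiff ℝ ((3 : ℕ) : WithTop ℕ∞) (pd2 F2) := contDiff_pd2 hu4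
  have hF2d : Differentiable ℝ F2 := hu.differentiable (by norm_num)
  have hP1d : Differentiable ℝ (pd1 F2) := hP1.differentiable (by norm_num)
  have hP2d : Differentiable ℝ (pd1 (pd1 F2)) := hP2.differentiable (by norm_num)
  have hP3d : Differentiable ℝ (pd1 (pd1 (pd1 F2))) := hP3.differentiable (by norm_num)
  -- slice functions at fixed t
  set h : ℝ → ℝ := fun x => u x t with hh
  set us : ℝ → ℝ := fun x => pd1 F2 (x, t) with hus
  set w : ℝ → ℝ := fun x => -(pd1 (pd1 F2) (x, t)) with hw
  set ws : ℝ → ℝ := fun x => -(pd1 (pd1 (pd1 F2)) (x, t)) with hws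
  set ut : ℝ → ℝ := fun x => pd2 F2 (x, t) with hut
  have hW : ∀ x, tfeW u x t = w x := fun x => tfeW_eq_pd hu x t
  have hWfun : (fun y => tfeW u y t) = w := funext hW
  have h_hd : ∀ x, HasDerivAt h (us x) x := fun x => hasDerivAt_slice1 hF2d x t
  have h_usd : ∀ x, HasDerivAt us (pd1 (pd1 F2) (x, t)) x := fun x =>
    hasDerivAt_slice1 hP1d x t
  have h_wd : ∀ x, HasDerivAt w (ws x) x := fun x =>
    ((hasDerivAt_slice1 hP2d x t).neg : HasDerivAt (fun y => -(pd1 (pd1 F2) (y, t))) _ x)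
  have h_usderiv : ∀ x, deriv (fun x => u x t) x = us x := fun x => (h_hd x).deriv
  have h_wsderiv : ∀ x, deriv (fun y => tfeW u y t) x = ws x := by
    intro x
    rw [hWfun]
    exact (h_wd x).deriv
  have h_utderiv : ∀ x, deriv (fun τ => u x τ) t = ut x := fun x =>
    (hasDerivAt_slice2 hF2d x t).deriv
  -- continuity of slices
  have hcont_h : Continuous h := (hF2d.continuous).comp (continuous_id.prodMk continuous_const)
  have hcont_us : Continuous us :=
    (hP1.continuous).comp (continuous_id.prodMk continuous_const)
  have hcont_w : Continuous w :=
    ((hP2.continuous).comp (continuous_id.prodMk continuous_const)).neg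
  have hcont_ws : Continuous ws :=
    ((hP3.continuous).comp (continuous_id.prodMk continuous_const)).neg
  have hcont_ut : Continuous ut :=
    (hUt.continuous).comp (continuous_id.prodMk continuous_const)
  -- φ and ψ
  set φ : ℝ → ℝ := fun x => tfeg n ε A (h x) with hφ
  set ψ : ℝ → ℝ := fun x => tfeF n ε (h x) * ws x with hψ
  have hψ_eq : (fun x => tfeF n ε (u x t) * deriv (fun y => tfeW u y t) x) = ψ := by
    funext x; rw [h_wsderiv x]
  have hφd : ∀ x, HasDerivAt φ ((tfeF n ε (h x))⁻¹ * us x) x := fun x =>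
    (hasDerivAt_tfeg hn hε A (h x)).comp x (h_hd x)
  have hcont_φ : Continuous φ := (continuous_tfeg hn hε A).comp hcont_h
  have hcont_ψ : Continuous ψ := (((continuous_tfeF hn).comp hcont_h).mul hcont_ws)
  -- pde in terms of ψ
  have hpde' : ∀ s ∈ Icc (0:ℝ) 1, ut s = deriv ψ s := by
    intro s hs
    rw [← h_utderiv s, ← hψ_eq]
    exact hpde s hs
  -- differentiability of ψ at good points
  have good : ∀ x : ℝ, (h x = 0 → us x = 0) → DifferentiableAt ℝ ψ x := by
    intro x hx
    have hderiv_h : deriv h x = us x := (h_hd x).deriv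
    have h1 : DifferentiableAt ℝ (fun y => |h y| ^ n) x :=
      differentiableAt_absRpow_comp hn (h_hd x).differentiableAt
        (fun h0 => by rw [hderiv_h]; exact hx h0)
    have h2 : DifferentiableAt ℝ (fun y => tfeF n ε (h y)) x := by
      simpa [tfeF] using h1.add_const ε
    have h3 : DifferentiableAt ℝ ws x :=
      (((hasDerivAt_slice1 hP3d x t).neg :
        HasDerivAt (fun y => -(pd1 (pd1 (pd1 F2)) (y, t))) _ x)).differentiableAt
    exact h2.mul h3
  -- ψ has derivative ut on Ioo 0 1
  have hψd : ∀ x ∈ Ioo (0:ℝ) 1, HasDerivAt ψ (ut x) x := by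
    intro x hx
    by_cases hgood : h x = 0 → us x = 0
    · have := (good x hgood).hasDerivAt
      rwa [← hpde' x (mem_Icc_of_Ioo hx)] at this
    · push_neg at hgood
      obtain ⟨hx0, husx⟩ := hgood
      -- isolated zero: use local extension
      apply hasDerivAt_of_eventually_nhdsNE _ hcont_ψ.continuousAt hcont_ut.continuousAt
      have hne : ∀ᶠ y in 𝓝[≠] x, h y ≠ h x := by
        apply eventually_ne_of_deriv_ne
        · rw [(h_hd x).deriv]; exact h_hd x
        · rw [(h_hd x).deriv]; exact husx
      have hIoo : ∀ᶠ y in 𝓝[≠] x, y ∈ Ioo (0:ℝ) 1 :=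
        eventually_nhdsWithin_of_eventually_nhds (isOpen_Ioo.eventually_mem hx)
      filter_upwards [hne, hIoo] with y hy hyI
      have hy0 : h y ≠ 0 := by rwa [hx0] at hy
      have := (good y (fun h0 => absurd h0 hy0)).hasDerivAt
      rwa [← hpde' y (mem_Icc_of_Ioo hyI)] at this
  -- the combined function Φ
  set Φ : ℝ → ℝ := fun x => φ x * ψ x - us x * w x with hΦdef
  have hΦd : ∀ x ∈ Ioo (0:ℝ) 1, HasDerivAt Φ (φ x * ut x + (w x) ^ 2) x := by
    intro x hx
    have h1 : HasDerivAt (fun y => φ y * ψ y)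
        (((tfeF n ε (h x))⁻¹ * us x) * ψ x + φ x * ut x) x :=
      (hφd x).mul (hψd x hx)
    have h2 : HasDerivAt (fun y => us y * w y)
        (pd1 (pd1 F2) (x, t) * w x + us x * ws x) x :=
      (h_usd x).mul (h_wd x)
    have e1 : ((tfeF n ε (h x))⁻¹ * us x) * ψ x = us x * ws x := by
      rw [hψ]
      field_simp [(tfeF_pos hn hε (h x)).ne']
    have e2 : pd1 (pd1 F2) (x, t) * w x = -(w x) ^ 2 := by
      have : pd1 (pd1 F2) (x, t) = -w x := by rw [hw]; ring
      rw [this]; ring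
    have := h1.sub h2
    rw [e1, e2] at this
    exact this.congr_deriv (by ring)
  have hcont_Φ : Continuous Φ := ((hcont_φ.mul hcont_ψ).sub (hcont_us.mul hcont_w))
  have hint : IntervalIntegrable (fun x => φ x * ut x + (w x) ^ 2) volume 0 1 :=
    ((hcont_φ.mul hcont_ut).add (hcont_w.pow 2)).intervalIntegrable 0 1
  have key : ∫ x in (0:ℝ)..1, (φ x * ut x + (w x) ^ 2) = Φ 1 - Φ 0 :=
    intervalIntegral.integral_eq_sub_of_hasDeriv_right_of_le zero_le_one
      hcont_Φ.continuousOn (fun x hx => (hΦd x hx).hasDerivWithinAt) hint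
  have hsplit : ∫ x in (0:ℝ)..1, (φ x * ut x + (w x) ^ 2)
      = (∫ x in (0:ℝ)..1, φ x * ut x) + ∫ x in (0:ℝ)..1, (w x) ^ 2 :=
    intervalIntegral.integral_add ((hcont_φ.mul hcont_ut).intervalIntegrable 0 1)
      ((hcont_w.pow 2).intervalIntegrable 0 1)
  -- rewrite the goal
  have hLHS : ∫ s in (0:ℝ)..1, tfeg n ε A (u s t) * deriv (fun τ => u s τ) t
      = ∫ x in (0:ℝ)..1, φ x * ut x := by
    apply intervalIntegral.integral_congr
    intro s _
    show tfeg n ε A (u s t) * deriv (fun τ => u s τ) t = φ s * ut s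
    rw [h_utderiv s]
  have hRHSw : ∫ s in (0:ℝ)..1, (tfeW u s t) ^ 2 = ∫ x in (0:ℝ)..1, (w x) ^ 2 := by
    apply intervalIntegral.integral_congr
    intro s _
    show tfeW u s t ^ 2 = w s ^ 2
    rw [hW s]
  rw [hLHS, hRHSw]
  have : (∫ x in (0:ℝ)..1, φ x * ut x) = Φ 1 - Φ 0 - ∫ x in (0:ℝ)..1, (w x) ^ 2 := by
    rw [← key, hsplit]; ring
  rw [this, hΦdef]
  simp only [hW 1, hW 0, h_usderiv 1, h_usderiv 0, h_wsderiv 1, h_wsderiv 0, hφ, hψ, hh]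
end edge
section timederiv
variable {n ε : ℝ}

/-- Differentiation under the integral sign for the entropy of one edge. -/
lemma hasDerivAt_entropy_edge (hn : 1 ≤ n) (hε : 0 < ε) (A : ℝ)
    {u : ℝ → ℝ → ℝ} (hu : ContDiff ℝ 4 (fun p : ℝ × ℝ => u p.1 p.2)) (t₀ : ℝ) :
    HasDerivAt (fun τ => ∫ s in (0:ℝ)..1, tfeG n ε A (u s τ))
      (∫ s in (0:ℝ)..1, tfeg n ε A (u s t₀) * deriv (fun τ => u s τ) t₀) t₀ := by
  set F2 : ℝ × ℝ → ℝ := fun p : ℝ × ℝ => u p.1 p.2 with hF2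
  have hu4 : ContDiff ℝ ((3 + 1 : ℕ) : WithTop ℕ∞) F2 := by exact_mod_cast hu
  have hF2d : Differentiable ℝ F2 := hu.differentiable (by norm_num)
  have hUt : ContDiff ℝ ((3 : ℕ) : WithTop ℕ∞) (pd2 F2) := contDiff_pd2 hu4
  have hcF2 : Continuous F2 := hF2d.continuous
  set Fp : ℝ × ℝ → ℝ := fun p => tfeg n ε A (F2 p) * pd2 F2 p with hFp
  have hcFp : Continuous Fp := ((continuous_tfeg hn hε A).comp hcF2).mul hUt.continuous
  obtain ⟨C, hC⟩ := (((isCompact_Icc (a := (0:ℝ)) (b := 1)).prod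
      (isCompact_Icc (a := t₀ - 1) (b := t₀ + 1)))).exists_bound_of_continuousOn
      hcFp.continuousOn
  have hslice : ∀ x : ℝ, Continuous fun s => u s x := fun x =>
    hcF2.comp (continuous_id.prodMk continuous_const)
  have main := intervalIntegral.hasDerivAt_integral_of_dominated_loc_of_deriv_le
      (F := fun τ s => tfeG n ε A (u s τ))
      (F' := fun τ s => tfeg n ε A (u s τ) * pd2 F2 (s, τ))
      (x₀ := t₀) (a := 0) (b := 1) (μ := volume) (bound := fun _ => C) (s := Metric.ball t₀ 1)
      (Metric.ball_mem_nhds t₀ one_pos)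
      (Eventually.of_forall fun x =>
        (((continuous_tfeG hn hε A).comp (hslice x)).aestronglyMeasurable))
      (((continuous_tfeG hn hε A).comp (hslice t₀)).intervalIntegrable 0 1)
      ((((continuous_tfeg hn hε A).comp (hslice t₀)).mul
        (hUt.continuous.comp (continuous_id.prodMk continuous_const))).aestronglyMeasurable)
      ?bound
      (intervalIntegrable_const)
      ?diff
  · obtain ⟨-, hkey⟩ := main
    have heq : (∫ s in (0:ℝ)..1, tfeg n ε A (u s t₀) * deriv (fun τ => u s τ) t₀)
        = ∫ s in (0:ℝ)..1, tfeg n ε A (u s t₀) * pd2 F2 (s, t₀) := by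
      apply intervalIntegral.integral_congr
      intro s _
      show tfeg n ε A (u s t₀) * deriv (fun τ => u s τ) t₀ = _
      rw [(hasDerivAt_slice2 hF2d s t₀).deriv]
    rw [heq]
    exact hkey
  case bound =>
    apply Eventually.of_forall
    intro s hs x hx
    have hs' : s ∈ Icc (0:ℝ) 1 := by
      rw [uIoc_of_le zero_le_one] at hs
      exact ⟨hs.1.le, hs.2⟩
    have hx' : x ∈ Icc (t₀ - 1) (t₀ + 1) := by
      rw [Metric.mem_ball, Real.dist_eq, abs_sub_lt_iff] at hx
      constructor <;> linarith [hx.1, hx.2]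
    exact hC (s, x) ⟨hs', hx'⟩
  case diff =>
    apply Eventually.of_forall
    intro s _ x _
    exact (hasDerivAt_tfeG hn hε A (u s x)).comp x (hasDerivAt_slice2 hF2d s x)

end timederiv


section vertex

lemma vertex_sum_zero {l m : ℕ} {n ε T : ℝ} {tl hd : Fin l → Fin m} {bdry : Set (Fin m)}
    {u : Fin l → ℝ → ℝ → ℝ} (hu : IsGraphTFESolution n ε T tl hd bdry u)
    (A : ℝ) {t : ℝ} (ht : t ∈ Icc (0:ℝ) T) :
    ∑ j : Fin l,
      ((tfeg n ε A (u j 1 t) * (tfeF n ε (u j 1 t) * deriv (fun y => tfeW (u j) y t) 1)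
          - deriv (fun x => u j x t) 1 * tfeW (u j) 1 t)
        - (tfeg n ε A (u j 0 t) * (tfeF n ε (u j 0 t) * deriv (fun y => tfeW (u j) y t) 0)
          - deriv (fun x => u j x t) 0 * tfeW (u j) 0 t)) = 0 := by
  classical
  set Bh : Fin l → ℝ := fun j =>
    tfeg n ε A (u j 1 t) * (tfeF n ε (u j 1 t) * deriv (fun y => tfeW (u j) y t) 1)
      - deriv (fun x => u j x t) 1 * tfeW (u j) 1 t with hBh
  set Bt : Fin l → ℝ := fun j =>
    tfeg n ε A (u j 0 t) * (tfeF n ε (u j 0 t) * deriv (fun y => tfeW (u j) y t) 0)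
      - deriv (fun x => u j x t) 0 * tfeW (u j) 0 t with hBt
  rw [Finset.sum_sub_distrib,
    ← Finset.sum_fiberwise_of_maps_to (fun j (_ : j ∈ Finset.univ) => Finset.mem_univ (hd j)) Bh,
    ← Finset.sum_fiberwise_of_maps_to (fun j (_ : j ∈ Finset.univ) => Finset.mem_univ (tl j)) Bt,
    ← Finset.sum_sub_distrib]
  apply Finset.sum_eq_zero
  intro a _
  by_cases ha : a ∈ bdry
  · have h1 : ∑ j ∈ Finset.univ.filter (fun j => hd j = a), Bh j = 0 := by
      apply Finset.sum_eq_zero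
      intro j hj
      obtain ⟨e1, e2⟩ := hu.bdry_head a ha t ht j (Finset.mem_filter.1 hj).2
      simp only [hBh, e1, e2]
      ring
    have h2 : ∑ i ∈ Finset.univ.filter (fun i => tl i = a), Bt i = 0 := by
      apply Finset.sum_eq_zero
      intro i hi
      obtain ⟨e1, e2⟩ := hu.bdry_tail a ha t ht i (Finset.mem_filter.1 hi).2
      simp only [hBt, e1, e2]
      ring
    rw [h1, h2, sub_zero]
  · rcases (Finset.univ.filter (fun j => hd j = a)).eq_empty_or_nonempty with hK | ⟨j₀, hj₀⟩
    · rcases (Finset.univ.filter (fun i => tl i = a)).eq_empty_or_nonempty with hL | ⟨i₀, hi₀⟩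
      · rw [hK, hL, Finset.sum_empty, Finset.sum_empty, sub_zero]
      · have hi₀' : tl i₀ = a := (Finset.mem_filter.1 hi₀).2
        have hws0 : ∑ i ∈ Finset.univ.filter (fun i => tl i = a),
            deriv (fun x => tfeW (u i) x t) 0 = 0 := by
          have hk := hu.kirchhoff_w a ha t ht
          rw [hK, Finset.sum_empty] at hk
          exact hk.symm
        have hus0 : ∑ i ∈ Finset.univ.filter (fun i => tl i = a),
            deriv (fun x => u i x t) 0 = 0 := by
          have hk := hu.kirchhoff_u a ha t ht
          rw [hK, Finset.sum_empty] at hk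
          exact hk.symm
        have hSt : ∑ i ∈ Finset.univ.filter (fun i => tl i = a), Bt i
            = tfeg n ε A (u i₀ 0 t) * tfeF n ε (u i₀ 0 t)
                * (∑ i ∈ Finset.univ.filter (fun i => tl i = a),
                    deriv (fun x => tfeW (u i) x t) 0)
              - tfeW (u i₀) 0 t
                * (∑ i ∈ Finset.univ.filter (fun i => tl i = a),
                    deriv (fun x => u i x t) 0) := by
          rw [Finset.mul_sum, Finset.mul_sum, ← Finset.sum_sub_distrib]
          apply Finset.sum_congr rfl
          intro i hi
          have hi' : tl i = a := (Finset.mem_filter.1 hi).2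
          simp only [hBt]
          rw [hu.cont_u_tt a ha t ht i i₀ hi' hi₀', hu.cont_w_tt a ha t ht i i₀ hi' hi₀']
          ring
        rw [hK, Finset.sum_empty, hSt, hws0, hus0]
        ring
    · have hj₀' : hd j₀ = a := (Finset.mem_filter.1 hj₀).2
      have hSh : ∑ j ∈ Finset.univ.filter (fun j => hd j = a), Bh j
          = tfeg n ε A (u j₀ 1 t) * tfeF n ε (u j₀ 1 t)
              * (∑ j ∈ Finset.univ.filter (fun j => hd j = a),
                  deriv (fun x => tfeW (u j) x t) 1)
            - tfeW (u j₀) 1 t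
              * (∑ j ∈ Finset.univ.filter (fun j => hd j = a),
                  deriv (fun x => u j x t) 1) := by
        rw [Finset.mul_sum, Finset.mul_sum, ← Finset.sum_sub_distrib]
        apply Finset.sum_congr rfl
        intro j hj
        have hj' : hd j = a := (Finset.mem_filter.1 hj).2
        simp only [hBh]
        rw [hu.cont_u_hh a ha t ht j j₀ hj' hj₀', hu.cont_w_hh a ha t ht j j₀ hj' hj₀']
        ring
      have hSt : ∑ i ∈ Finset.univ.filter (fun i => tl i = a), Bt i
          = tfeg n ε A (u j₀ 1 t) * tfeF n ε (u j₀ 1 t)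
              * (∑ i ∈ Finset.univ.filter (fun i => tl i = a),
                  deriv (fun x => tfeW (u i) x t) 0)
            - tfeW (u j₀) 1 t
              * (∑ i ∈ Finset.univ.filter (fun i => tl i = a),
                  deriv (fun x => u i x t) 0) := by
        rw [Finset.mul_sum, Finset.mul_sum, ← Finset.sum_sub_distrib]
        apply Finset.sum_congr rfl
        intro i hi
        have hi' : tl i = a := (Finset.mem_filter.1 hi).2
        simp only [hBt]
        rw [← hu.cont_u_ht a ha t ht j₀ i hj₀' hi', ← hu.cont_w_ht a ha t ht j₀ i hj₀' hi']
        ring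
      rw [hSh, hSt, hu.kirchhoff_u a ha t ht, hu.kirchhoff_w a ha t ht]
      ring

end vertex


/-- the entropy identity and entropy dissipation for classical solutions of the
regularized thin-film system on a graph. -/
theorem entropy_identity {l m : ℕ} (hl : 1 ≤ l) (hm : 1 ≤ m)
    (n ε T : ℝ) (hn : 1 ≤ n) (hε : 0 < ε) (hT : 0 < T)
    (tl hd : Fin l → Fin m) (bdry : Set (Fin m)) (u : Fin l → ℝ → ℝ → ℝ)
    (hu : IsGraphTFESolution n ε T tl hd bdry u)
    (A : ℝ) (hA : 0 < A) :
    (∀ t ∈ Icc (0:ℝ) T,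
      ∑ j : Fin l, (∫ s in (0:ℝ)..1, tfeG n ε A (u j s t))
        + ∑ j : Fin l, (∫ σ in (0:ℝ)..t, ∫ s in (0:ℝ)..1, (tfeW (u j) s σ) ^ 2)
      = ∑ j : Fin l, (∫ s in (0:ℝ)..1, tfeG n ε A (u j s 0))) ∧
    (∀ t₁ ∈ Icc (0:ℝ) T, ∀ t₂ ∈ Icc (0:ℝ) T, t₁ ≤ t₂ →
      ∑ j : Fin l, (∫ s in (0:ℝ)..1, tfeG n ε A (u j s t₂))
        ≤ ∑ j : Fin l, (∫ s in (0:ℝ)..1, tfeG n ε A (u j s t₁))) := by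
    classical
  -- joint continuity of `w` on each edge
  have hw_cont : ∀ j, Continuous fun p : ℝ × ℝ => tfeW (u j) p.1 p.2 := by
    intro j
    have hu4 : ContDiff ℝ ((3 + 1 : ℕ) : WithTop ℕ∞) (fun p : ℝ × ℝ => u j p.1 p.2) := by
      exact_mod_cast hu.smooth j
    have hP1 : ContDiff ℝ ((2 + 1 : ℕ) : WithTop ℕ∞) (pd1 fun p : ℝ × ℝ => u j p.1 p.2) := by
      exact_mod_cast contDiff_pd1 hu4
    have hP2 : ContDiff ℝ ((2 : ℕ) : WithTop ℕ∞)
        (pd1 (pd1 fun p : ℝ × ℝ => u j p.1 p.2)) := by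
      exact_mod_cast contDiff_pd1 hP1
    have heq : (fun p : ℝ × ℝ => tfeW (u j) p.1 p.2)
        = fun p : ℝ × ℝ => -(pd1 (pd1 fun q : ℝ × ℝ => u j q.1 q.2) p) := by
      funext p
      exact tfeW_eq_pd (hu.smooth j) p.1 p.2
    rw [heq]
    exact hP2.continuous.neg
  -- continuity of the dissipation integrals
  have hIcont : ∀ j : Fin l, Continuous fun σ => ∫ s in (0:ℝ)..1, (tfeW (u j) s σ) ^ 2 := by
    intro j
    apply intervalIntegral.continuous_parametric_intervalIntegral_of_continuous'
      (f := fun σ s => (tfeW (u j) s σ) ^ 2)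
    exact (Continuous.pow ((hw_cont j).comp continuous_swap) 2 :)
  -- entropy derivative
  have hE : ∀ t ∈ Icc (0:ℝ) T,
      HasDerivAt (fun τ => ∑ j : Fin l, ∫ s in (0:ℝ)..1, tfeG n ε A (u j s τ))
        (-(∑ j : Fin l, ∫ s in (0:ℝ)..1, (tfeW (u j) s t) ^ 2)) t := by
    intro t ht
    have h1 : HasDerivAt (fun τ => ∑ j : Fin l, ∫ s in (0:ℝ)..1, tfeG n ε A (u j s τ))
        (∑ j : Fin l, ∫ s in (0:ℝ)..1, tfeg n ε A (u j s t) * deriv (fun τ => u j s τ) t) t :=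
      HasDerivAt.fun_sum fun j _ => hasDerivAt_entropy_edge hn hε A (hu.smooth j) t
    have h2 : (∑ j : Fin l,
          ∫ s in (0:ℝ)..1, tfeg n ε A (u j s t) * deriv (fun τ => u j s τ) t)
        = -(∑ j : Fin l, ∫ s in (0:ℝ)..1, (tfeW (u j) s t) ^ 2) := by
      have h3 : ∀ j : Fin l,
          (∫ s in (0:ℝ)..1, tfeg n ε A (u j s t) * deriv (fun τ => u j s τ) t)
          = ((tfeg n ε A (u j 1 t) * (tfeF n ε (u j 1 t) * deriv (fun y => tfeW (u j) y t) 1)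
              - deriv (fun x => u j x t) 1 * tfeW (u j) 1 t)
            - (tfeg n ε A (u j 0 t) * (tfeF n ε (u j 0 t) * deriv (fun y => tfeW (u j) y t) 0)
              - deriv (fun x => u j x t) 0 * tfeW (u j) 0 t))
            - ∫ s in (0:ℝ)..1, (tfeW (u j) s t) ^ 2 := fun j =>
        edge_integral_identity hn hε A (hu.smooth j) (fun s hs => hu.pde j s hs t ht)
      rw [Finset.sum_congr rfl (fun j _ => h3 j), Finset.sum_sub_distrib,
        vertex_sum_zero hu A ht, zero_sub]
    rwa [h2] at h1
  -- the entropy identity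
  have hident : ∀ t ∈ Icc (0:ℝ) T,
      (∑ j : Fin l, ∫ s in (0:ℝ)..1, tfeG n ε A (u j s t))
        + ∑ j : Fin l, (∫ σ in (0:ℝ)..t, ∫ s in (0:ℝ)..1, (tfeW (u j) s σ) ^ 2)
        = ∑ j : Fin l, ∫ s in (0:ℝ)..1, tfeG n ε A (u j s 0) := by
    intro t ht
    have hftc : ∫ σ in (0:ℝ)..t,
          (fun σ => -(∑ j : Fin l, ∫ s in (0:ℝ)..1, (tfeW (u j) s σ) ^ 2)) σ
        = (∑ j : Fin l, ∫ s in (0:ℝ)..1, tfeG n ε A (u j s t))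
          - ∑ j : Fin l, ∫ s in (0:ℝ)..1, tfeG n ε A (u j s 0) := by
      apply intervalIntegral.integral_eq_sub_of_hasDerivAt
      · intro σ hσ
        rw [uIcc_of_le ht.1] at hσ
        exact hE σ ⟨hσ.1, hσ.2.trans ht.2⟩
      · exact ((continuous_finset_sum _ fun j _ => hIcont j).neg).intervalIntegrable 0 t
    rw [intervalIntegral.integral_neg, intervalIntegral.integral_finset_sum
      (fun j _ => ((hIcont j).intervalIntegrable 0 t))] at hftc
    linarith
  refine ⟨hident, ?_⟩
  intro t₁ ht₁ t₂ ht₂ h12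
  have h1 := hident t₁ ht₁
  have h2 := hident t₂ ht₂
  have hmono : ∑ j : Fin l, (∫ σ in (0:ℝ)..t₁, ∫ s in (0:ℝ)..1, (tfeW (u j) s σ) ^ 2)
      ≤ ∑ j : Fin l, (∫ σ in (0:ℝ)..t₂, ∫ s in (0:ℝ)..1, (tfeW (u j) s σ) ^ 2) := by
    apply Finset.sum_le_sum
    intro j _
    have hadd : (∫ σ in (0:ℝ)..t₁, ∫ s in (0:ℝ)..1, (tfeW (u j) s σ) ^ 2)
          + (∫ σ in t₁..t₂, ∫ s in (0:ℝ)..1, (tfeW (u j) s σ) ^ 2)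
        = ∫ σ in (0:ℝ)..t₂, ∫ s in (0:ℝ)..1, (tfeW (u j) s σ) ^ 2 :=
      intervalIntegral.integral_add_adjacent_intervals
        ((hIcont j).intervalIntegrable 0 t₁) ((hIcont j).intervalIntegrable t₁ t₂)
    have hpos : 0 ≤ ∫ σ in t₁..t₂, ∫ s in (0:ℝ)..1, (tfeW (u j) s σ) ^ 2 :=
      intervalIntegral.integral_nonneg h12 fun σ _ =>
        intervalIntegral.integral_nonneg zero_le_one fun s _ => sq_nonneg _
    linarith
  linarith
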